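/- Let k be an algebraically closed field and A an associative unital k-algebra (not necessarily finite-dimensional). Suppose the abelian category mod(A) of A-modules that are finite-dimensional over k admits the structure of a rigid monoidal category (a k-linear monoidal structure in which every object has a left and a right dual). Then an object of mod(A) is projective if and only if it is injective. -/

import Mathlib

/-!
Statement 12: if the category of finite-dimensional modules over a `k`-algebra `A` (with `k`
algebraically closed) admits a rigid (k-linear) monoidal structure, then its projective and
injective objects coincide.
-/

open CategoryTheory

universe u

/-- The category `mod(A)` of left `A`-modules whose underlying `k`-vector space is
finite-dimensional, for a `k`-algebra `A`. -/
abbrev FinMod (k A : Type u) [Field k] [Ring A] [Algebra k A] : Type (u + 1) :=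
  CategoryTheory.ObjectProperty.FullSubcategory
    (fun M : ModuleCat.{u} A => Module.Finite k (RestrictScalars k A M))

section RigidAux

open CategoryTheory MonoidalCategory

variable {C : Type*} [Category C] [MonoidalCategory C]

/-- The double-mate identity: the right mate of the left mate of `f` is `f`. -/
theorem aux_rightMate_leftMate {X Y : C} [HasLeftDual X] [HasLeftDual Y] (f : X ⟶ Y) :
    ((ᘁf)ᘁ) = f := by
  have h : η_ (ᘁX) X ≫ (ᘁX : C) ◁ ((ᘁf)ᘁ) = η_ (ᘁX) X ≫ (ᘁX : C) ◁ f :=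
    (coevaluation_comp_rightAdjointMate (ᘁf)).trans (coevaluation_comp_leftAdjointMate f)
  simpa using congrArg (tensorLeftHomEquiv (𝟙_ C) (ᘁX) X Y).symm h

/-- The double-mate identity: the left mate of the right mate of `f` is `f`. -/
theorem aux_leftMate_rightMate {X Y : C} [HasRightDual X] [HasRightDual Y] (f : X ⟶ Y) :
    (ᘁ(fᘁ)) = f := by
  have h : η_ X (Xᘁ) ≫ (ᘁ(fᘁ)) ▷ (Xᘁ : C) = η_ X (Xᘁ) ≫ f ▷ (Xᘁ : C) :=
    (coevaluation_comp_leftAdjointMate (fᘁ)).trans (coevaluation_comp_rightAdjointMate f)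
  simpa using congrArg (tensorRightHomEquiv (𝟙_ C) X (Xᘁ) Y).symm h

variable [RigidCategory C]

/-- The left mate of a monomorphism is an epimorphism. -/
theorem aux_epi_leftMate {X Y : C} (m : X ⟶ Y) [Mono m] : Epi (ᘁm) := by
  constructor
  intro W u v huv
  have h := congrArg rightAdjointMate huv
  rw [comp_rightAdjointMate, comp_rightAdjointMate, aux_rightMate_leftMate m] at h
  have h2 := (cancel_mono m).mp h
  have h3 := congrArg leftAdjointMate h2
  rwa [aux_leftMate_rightMate u, aux_leftMate_rightMate v] at h3

/-- The right mate of an epimorphism is a monomorphism. -/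
theorem aux_mono_rightMate {X Y : C} (e : X ⟶ Y) [Epi e] : Mono (eᘁ) := by
  constructor
  intro W u v huv
  have h := congrArg leftAdjointMate huv
  rw [comp_leftAdjointMate, comp_leftAdjointMate, aux_leftMate_rightMate e] at h
  have h2 := (cancel_epi e).mp h
  have h3 := congrArg rightAdjointMate h2
  rwa [aux_rightMate_leftMate u, aux_rightMate_leftMate v] at h3

/-- The right dual of a projective object is injective. -/
theorem aux_injective_rightDual {P : C} (hP : Projective P) : Injective (Pᘁ) := by
  constructor
  intro X Y g f hf
  haveI : Epi (ᘁf) := aux_epi_leftMate f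
  obtain ⟨t, ht⟩ := hP.factors (ᘁg) (ᘁf)
  refine ⟨tᘁ, ?_⟩
  have h2 := congrArg rightAdjointMate ht
  rwa [comp_rightAdjointMate, aux_rightMate_leftMate f, aux_rightMate_leftMate g] at h2

/-- The left dual of an injective object is projective. -/
theorem aux_projective_leftDual {I : C} (hI : Injective I) : Projective (ᘁI) := by
  constructor
  intro E Z f e he
  haveI : Mono (eᘁ) := aux_mono_rightMate e
  obtain ⟨t, ht⟩ := hI.factors (fᘁ) (eᘁ)
  refine ⟨ᘁt, ?_⟩
  have h2 := congrArg leftAdjointMate ht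
  rwa [comp_leftAdjointMate, aux_leftMate_rightMate e, aux_leftMate_rightMate f] at h2

/-- Tensoring on the left preserves injectivity. -/
theorem aux_injective_tensorLeft (X : C) {J : C} (hJ : Injective J) : Injective (X ⊗ J) := by
  haveI : (tensorLeft (Xᘁ : C)).PreservesMonomorphisms :=
    Functor.preservesMonomorphisms_of_adjunction (tensorLeftAdjunction (Xᘁ : C) ((Xᘁ)ᘁ))
  exact (tensorLeftAdjunction X (Xᘁ)).map_injective J hJ

/-- Tensoring on the right preserves injectivity. -/
theorem aux_injective_tensorRight (X : C) {J : C} (hJ : Injective J) : Injective (J ⊗ X) := by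
  haveI : (tensorRight (ᘁX : C)).PreservesMonomorphisms :=
    Functor.preservesMonomorphisms_of_adjunction (tensorRightAdjunction (ᘁ(ᘁX) : C) (ᘁX))
  exact (tensorRightAdjunction (ᘁX) X).map_injective J hJ

/-- Tensoring on the left preserves projectivity. -/
theorem aux_projective_tensorLeft (X : C) {J : C} (hJ : Projective J) : Projective (X ⊗ J) := by
  haveI : (tensorLeft (ᘁX : C)).PreservesEpimorphisms :=
    Functor.preservesEpimorphisms_of_adjunction (tensorLeftAdjunction (ᘁ(ᘁX) : C) (ᘁX))
  exact (tensorLeftAdjunction (ᘁX) X).map_projective J hJ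

/-- Tensoring on the right preserves projectivity. -/
theorem aux_projective_tensorRight (X : C) {J : C} (hJ : Projective J) : Projective (J ⊗ X) := by
  haveI : (tensorRight (Xᘁ : C)).PreservesEpimorphisms :=
    Functor.preservesEpimorphisms_of_adjunction (tensorRightAdjunction (Xᘁ : C) ((Xᘁ)ᘁ))
  exact (tensorRightAdjunction X (Xᘁ)).map_projective J hJ

end RigidAux

section Retract

variable {C : Type*} [Category C]

/-- A retract of an injective object is injective. -/
theorem aux_injective_of_retract {P Q : C} (s : P ⟶ Q) (r : Q ⟶ P) (hsr : s ≫ r = 𝟙 P)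
    (hQ : Injective Q) : Injective P := by
  constructor
  intro X Y g f hf
  obtain ⟨h, hh⟩ := hQ.factors (g ≫ s) f
  refine ⟨h ≫ r, ?_⟩
  rw [← Category.assoc, hh, Category.assoc, hsr, Category.comp_id]

/-- A retract of a projective object is projective. -/
theorem aux_projective_of_retract {P Q : C} (s : P ⟶ Q) (r : Q ⟶ P) (hsr : s ≫ r = 𝟙 P)
    (hQ : Projective Q) : Projective P := by
  constructor
  intro E X f e he
  obtain ⟨t, ht⟩ := hQ.factors (r ≫ f) e
  refine ⟨s ≫ t, ?_⟩
  rw [Category.assoc, ht, ← Category.assoc, hsr, Category.id_comp]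

end Retract

section Main

open CategoryTheory MonoidalCategory

/-- In any rigid monoidal category, projective and injective objects coincide. -/
theorem aux_projective_iff_injective_rigid {C : Type*} [Category C] [MonoidalCategory C]
    [RigidCategory C] (M : C) : Projective M ↔ Injective M := by
  constructor
  · intro hP
    have hdual : Injective (Mᘁ : C) := aux_injective_rightDual hP
    have h2 : Injective ((M ⊗ (Mᘁ : C)) ⊗ M) :=
      aux_injective_tensorRight M (aux_injective_tensorLeft M hdual)
    refine aux_injective_of_retract
      ((λ_ M).inv ≫ η_ M (Mᘁ) ▷ M)
      ((α_ M (Mᘁ) M).hom ≫ M ◁ ε_ M (Mᘁ) ≫ (ρ_ M).hom) ?_ h2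
    rw [Category.assoc, ExactPairing.evaluation_coevaluation_assoc]
    simp
  · intro hI
    have hdual : Projective (ᘁM : C) := aux_projective_leftDual hI
    have h2 : Projective ((M ⊗ (ᘁM : C)) ⊗ M) :=
      aux_projective_tensorRight M (aux_projective_tensorLeft M hdual)
    refine aux_projective_of_retract
      ((ρ_ M).inv ≫ M ◁ η_ (ᘁM) M ≫ (α_ M (ᘁM) M).inv)
      (ε_ (ᘁM) M ▷ M ≫ (λ_ M).hom) ?_ h2
    rw [Category.assoc, Category.assoc, ExactPairing.coevaluation_evaluation_assoc]
    simp

end Main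

/-- If the abelian category `mod(A)` of finite-dimensional modules over a `k`-algebra `A`
(`k` algebraically closed) admits a rigid `k`-linear monoidal structure, then an object of
`mod(A)` is projective if and only if it is injective. -/
theorem projective_iff_injective_of_rigid
    (k A : Type u) [Field k] [IsAlgClosed k] [Ring A] [Algebra k A]
    [MonoidalCategory (FinMod k A)]
    [MonoidalPreadditive (FinMod k A)]
    [MonoidalLinear k (FinMod k A)]
    [RigidCategory (FinMod k A)]
    (M : FinMod k A) :
    Projective M ↔ Injective M :=
  aux_projective_iff_injective_rigid M
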